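/- Let K, L be compact convex subsets of ℝ^d with K ∪ L convex, and let u be a unit vector. Write M_u = M \ (M ∩ H_u(M)) where H_u(M) is the supporting hyperplane of M with outer normal u (the set of points of M not attaining the maximum of ⟨u,·⟩ over M). Then (K ∪ L)_u = K_u ∪ L_u. -/

import Mathlib

/-- `M` with its exposed face in direction `u` removed. -/
noncomputable def faceRemoved {d : ℕ} (M : Set (EuclideanSpace ℝ (Fin d)))
    (u : EuclideanSpace ℝ (Fin d)) : Set (EuclideanSpace ℝ (Fin d)) :=
  {x ∈ M | inner ℝ u x < sSup ((fun y => (inner ℝ u y : ℝ)) '' M)}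

lemma faceRemoved_aux {d : ℕ} {K L : Set (EuclideanSpace ℝ (Fin d))}
    (hKc : IsCompact K) (hLc : IsCompact L) (hLne : L.Nonempty)
    (hU : Convex ℝ (K ∪ L)) (u : EuclideanSpace ℝ (Fin d))
    {x : EuclideanSpace ℝ (Fin d)} (hxK : x ∈ K)
    (hlt : (inner ℝ u x : ℝ) <
      max (sSup ((fun y => (inner ℝ u y : ℝ)) '' K)) (sSup ((fun y => (inner ℝ u y : ℝ)) '' L))) :
    x ∈ faceRemoved K u ∪ faceRemoved L u := by
  set f : EuclideanSpace ℝ (Fin d) → ℝ := fun y => inner ℝ u y with hf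
  have hfc : Continuous f := (continuous_const.inner continuous_id)
  have hbK : BddAbove (f '' K) := (hKc.image hfc).bddAbove
  have hbL : BddAbove (f '' L) := (hLc.image hfc).bddAbove
  by_cases hcase : f x < sSup (f '' K)
  · exact Or.inl ⟨hxK, hcase⟩
  · -- f x = sSup (f '' K), and sSup (f '' L) > f x
    have hxle : f x ≤ sSup (f '' K) := le_csSup hbK ⟨x, hxK, rfl⟩
    have hsL : f x < sSup (f '' L) := by
      rcases max_cases (sSup (f '' K)) (sSup (f '' L)) with ⟨h1, h2⟩ | ⟨h1, h2⟩
      · exact absurd (h1 ▸ hlt) hcase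
      · rwa [h1] at hlt
    obtain ⟨y, hyL, hyMax⟩ := hLc.exists_isMaxOn hLne hfc.continuousOn
    have hyS : sSup (f '' L) ≤ f y := csSup_le (hLne.image f) (by
      rintro _ ⟨z, hz, rfl⟩; exact hyMax hz)
    have hfy : f x < f y := lt_of_lt_of_le hsL hyS
    -- points on segment near x are in L
    have hseg : ∀ t : ℝ, t ∈ Set.Ioo (0:ℝ) 1 → (1 - t) • x + t • y ∈ L := by
      intro t ht
      have hmem : (1 - t) • x + t • y ∈ K ∪ L :=
        hU (Or.inl hxK) (Or.inr hyL) (by linarith [ht.2]) (le_of_lt ht.1) (by ring)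
      rcases hmem with hK' | hL'
      · exfalso
        have : f ((1 - t) • x + t • y) ≤ sSup (f '' K) := le_csSup hbK ⟨_, hK', rfl⟩
        have hval : f ((1 - t) • x + t • y) = (1 - t) * f x + t * f y := by
          simp only [hf, inner_add_right, real_inner_smul_right]
        nlinarith [ht.1, hxle]
      · exact hL'
    have htend : Filter.Tendsto (fun t : ℝ => (1 - t) • x + t • y) (nhdsWithin 0 (Set.Ioi 0)) (nhds x) := by
      have : Continuous (fun t : ℝ => (1 - t) • x + t • y) := by continuity
      have h1 := (this.tendsto 0).mono_left (nhdsWithin_le_nhds (s := Set.Ioi (0:ℝ)))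
      simpa using h1
    have hxL : x ∈ L := by
      refine hLc.isClosed.mem_of_tendsto htend ?_
      filter_upwards [Ioo_mem_nhdsGT_of_mem (by constructor <;> norm_num : (0:ℝ) ∈ Set.Ico 0 1)] with t ht
      exact hseg t ht
    exact Or.inr ⟨hxL, hsL⟩

/-- If `K ∪ L` is convex then `(K ∪ L)_u = K_u ∪ L_u`. -/
theorem faceRemoved_union {d : ℕ} (K L : Set (EuclideanSpace ℝ (Fin d)))
    (hKc : IsCompact K) (hKconv : Convex ℝ K) (hKne : K.Nonempty)
    (hLc : IsCompact L) (hLconv : Convex ℝ L) (hLne : L.Nonempty)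
    (hU : Convex ℝ (K ∪ L))
    (u : EuclideanSpace ℝ (Fin d)) (hu : ‖u‖ = 1) :
    faceRemoved (K ∪ L) u = faceRemoved K u ∪ faceRemoved L u := by
  set f : EuclideanSpace ℝ (Fin d) → ℝ := fun y => inner ℝ u y with hf
  have hfc : Continuous f := (continuous_const.inner continuous_id)
  have hbK : BddAbove (f '' K) := (hKc.image hfc).bddAbove
  have hbL : BddAbove (f '' L) := (hLc.image hfc).bddAbove
  have hsup : sSup (f '' (K ∪ L)) = max (sSup (f '' K)) (sSup (f '' L)) := by
    rw [Set.image_union, csSup_union hbK (hKne.image f) hbL (hLne.image f)]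
  ext x
  constructor
  · rintro ⟨hx, hlt⟩
    rw [show ((fun y => (inner ℝ u y : ℝ)) '' (K ∪ L)) = f '' (K ∪ L) from rfl, hsup] at hlt
    rcases hx with hxK | hxL
    · exact faceRemoved_aux hKc hLc hLne hU u hxK hlt
    · have := faceRemoved_aux hLc hKc hKne (Set.union_comm K L ▸ hU) u hxL (by rw [max_comm]; exact hlt)
      exact this.symm.imp id id
  · rintro (⟨hxK, hlt⟩ | ⟨hxL, hlt⟩)
    · exact ⟨Or.inl hxK, by rw [show ((fun y => (inner ℝ u y : ℝ)) '' (K ∪ L)) = f '' (K ∪ L) from rfl, hsup]; exact lt_of_lt_of_le hlt (le_max_left _ _)⟩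
    · exact ⟨Or.inr hxL, by rw [show ((fun y => (inner ℝ u y : ℝ)) '' (K ∪ L)) = f '' (K ∪ L) from rfl, hsup]; exact lt_of_lt_of_le hlt (le_max_right _ _)⟩
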